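/- arXiv:math-ph/0701004 — 6 statements merged into one kernel-verified Lean document; each statement's English description precedes it below -/
import Mathlib

section
/- Let L be a bounded invertible operator on the complex Hilbert space H = M ⊕ N (M a closed subspace, N = M^⊥), and suppose the compression R = P_M L|_M is an invertible operator on M. Then the compression Λ = P_N L^{-1}|_N is an invertible operator on N, and one has the identity (as bounded operators on H): ι_M R^{-1} P_M = L^{-1} − L^{-1} ι_N Λ^{-1} P_N L^{-1}, where ι_M : M → H and ι_N : N → H are the inclusion maps. -/
open ContinuousLinearMap

/-- **Schur complement inversion formula.** If `L` is a bounded invertible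
operator on `H = M ⊕ N` (`N = Mᗮ`) whose compression `R = P_M L|_M` is invertible on `M`,
then `Λ = P_N L⁻¹|_N` is invertible on `N` and
`ι_M R⁻¹ P_M = L⁻¹ − L⁻¹ ι_N Λ⁻¹ P_N L⁻¹`. -/
theorem stmt_2
    {H : Type*} [NormedAddCommGroup H] [InnerProductSpace ℂ H] [CompleteSpace H]
    (M : Submodule ℂ H) [CompleteSpace M]
    (L : H →L[ℂ] H) (hL : IsUnit L)
    (R : M →L[ℂ] M) (hR : R = (Submodule.orthogonalProjectionOnto M).comp (L.comp M.subtypeL))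
    (hRunit : IsUnit R)
    (Λ : Mᗮ →L[ℂ] Mᗮ)
    (hΛ : Λ = (Submodule.orthogonalProjectionOnto Mᗮ).comp ((Ring.inverse L).comp Mᗮ.subtypeL)) :
    IsUnit Λ ∧
      M.subtypeL.comp ((Ring.inverse R).comp (Submodule.orthogonalProjectionOnto M)) =
        Ring.inverse L -
          (Ring.inverse L).comp ((Mᗮ.subtypeL.comp ((Ring.inverse Λ).comp
            (Submodule.orthogonalProjectionOnto Mᗮ))).comp (Ring.inverse L)) := by
  set pM := Submodule.orthogonalProjectionOnto M with hpM
  set pN := Submodule.orthogonalProjectionOnto Mᗮ with hpN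
  set K := Ring.inverse L with hK
  set Ri := Ring.inverse R with hRi
  have hLK : L.comp K = 1 := Ring.mul_inverse_cancel L hL
  have hKL : K.comp L = 1 := Ring.inverse_mul_cancel L hL
  have lk : ∀ x, L (K x) = x := fun x => by simpa using DFunLike.congr_fun hLK x
  have kl : ∀ x, K (L x) = x := fun x => by simpa using DFunLike.congr_fun hKL x
  have rri : ∀ m, R (Ri m) = m := fun m => by
    simpa using DFunLike.congr_fun (Ring.mul_inverse_cancel R hRunit) m
  have rir : ∀ m, Ri (R m) = m := fun m => by
    simpa using DFunLike.congr_fun (Ring.inverse_mul_cancel R hRunit) m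
  -- pointwise basic facts
  have hRap : ∀ m : M, pM (L ↑m) = R m := fun m => by rw [hR]; rfl
  have pmm : ∀ m : M, pM ↑m = m := fun m => Submodule.orthogonalProjectionOnto_mem_subspace_eq_self m
  have pnn : ∀ n : Mᗮ, pN ↑n = n := fun n => Submodule.orthogonalProjectionOnto_mem_subspace_eq_self n
  have pMn : ∀ n : Mᗮ, pM ↑n = 0 := fun n =>
    Submodule.orthogonalProjectionOnto_apply_of_mem_orthogonal n.2
  have pNm : ∀ m : M, pN ↑m = 0 := fun m =>
    Submodule.orthogonalProjectionOnto_apply_of_mem_orthogonal (Submodule.le_orthogonal_orthogonal M m.2)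
  have dec : ∀ y : H, (↑(pN y) : H) = y - ↑(pM y) := fun y => by
    rw [eq_sub_iff_add_eq, add_comm]
    exact Submodule.starProjection_add_starProjection_orthogonal (K := M) y
  -- the partial inverse E and the Schur-type operator G
  set E : H →L[ℂ] H := M.subtypeL.comp (Ri.comp pM) with hE
  set G : H →L[ℂ] H := L - (L.comp E).comp L with hG
  have Eap : ∀ x, E x = ↑(Ri (pM x)) := fun x => rfl
  have Gap : ∀ x, G x = L x - L (E (L x)) := fun x => rfl
  have pMG : ∀ x, pM (G x) = 0 := fun x => by
    rw [Gap, map_sub, Eap, hRap, rri, sub_self]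
  have GιM : ∀ m : M, G ↑m = 0 := fun m => by
    rw [Gap, Eap, hRap, rir, sub_self]
  have qE : ∀ x, pN (E x) = 0 := fun x => by rw [Eap, pNm]
  have EιN : ∀ n : Mᗮ, E ↑n = 0 := fun n => by rw [Eap, pMn, map_zero, Submodule.coe_zero]
  have Λap : ∀ n : Mᗮ, Λ n = pN (K ↑n) := fun n => by rw [hΛ]; rfl
  -- candidate inverse of Λ
  set S : Mᗮ →L[ℂ] Mᗮ := pN.comp (G.comp Mᗮ.subtypeL) with hS
  have Sap : ∀ n : Mᗮ, S n = pN (G ↑n) := fun n => rfl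
  have hΛS : Λ * S = 1 := by
    ext n
    have h1 : (↑(pN (G ↑n)) : H) = G ↑n := by rw [dec, pMG, Submodule.coe_zero, sub_zero]
    have : Λ (S n) = n := by
      calc Λ (S n) = pN (K (G ↑n)) := by rw [Sap, Λap, h1]
        _ = pN ((↑n : H) - E (L ↑n)) := by rw [Gap, map_sub, kl, kl]
        _ = n := by rw [map_sub, pnn, qE, sub_zero]
    simpa using this
  have hSΛ : S * Λ = 1 := by
    ext n
    have : S (Λ n) = n := by
      calc S (Λ n) = pN (G ↑(pN (K ↑n))) := by rw [Λap, Sap]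
        _ = pN (G (K ↑n)) := by rw [dec, map_sub, GιM, sub_zero]
        _ = pN ((↑n : H) - L (E ↑n)) := by rw [Gap, lk]
        _ = n := by rw [EιN, map_zero, sub_zero, pnn]
    simpa using this
  have hSinv : Ring.inverse Λ = S :=
    Ring.inverse_unit (⟨Λ, S, hΛS, hSΛ⟩ : (↥Mᗮ →L[ℂ] ↥Mᗮ)ˣ)
  refine ⟨⟨⟨Λ, S, hΛS, hSΛ⟩, rfl⟩, ?_⟩
  ext x
  simp only [hSinv, coe_comp', Function.comp_apply, sub_apply, Submodule.coe_subtypeL',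
    Submodule.coe_subtype]
  have a1 : (↑(pN (K x)) : H) = K x - ↑(pM (K x)) := dec _
  have a2 : G ↑(pN (K x)) = G (K x) := by rw [a1, map_sub, GιM, sub_zero]
  have e1 : (↑(S (pN (K x))) : H) = G (K x) := by
    rw [Sap, dec (G ↑(pN (K x))), pMG, Submodule.coe_zero, sub_zero, a2]
  have e2 : K (G (K x)) = K x - E x := by rw [Gap, map_sub, kl, kl, lk]
  rw [e1, e2, sub_sub_cancel]
end

section
/- Let K be a bounded self-adjoint operator on a complex Hilbert space H, M a closed subspace of H, N = M^⊥, and let T = P_M K|_M, Γ = P_N K|_M, and S = P_N K|_N be the compressions of K. Assume T ≥ 0. Then for every ε > 0 the operator T + εI_M is invertible on M, and K + εI_H ≥ 0 if and only if S + εI_N − Γ (T + εI_M)^{-1} Γ* ≥ 0 as an operator on N. -/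
open ContinuousLinearMap

private lemma eps_smul_one_sa (ε : ℝ) {E : Type*} [NormedAddCommGroup E]
    [InnerProductSpace ℂ E] [CompleteSpace E] :
    IsSelfAdjoint ((ε : ℂ) • (1 : E →L[ℂ] E)) :=
  IsSelfAdjoint.smul (isSelfAdjoint_iff.2 (by rw [Complex.star_def, Complex.conj_ofReal]))
    (IsSelfAdjoint.one _)

set_option maxHeartbeats 1000000 in
/-- Let `K` be a bounded self-adjoint operator on `H`, `M` a closed subspace,
`N = Mᗮ`, `T = P_M K|_M`, `Γ = P_N K|_M`, `S = P_N K|_N`, and assume `T ≥ 0`. Then for every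
`ε > 0` the operator `T + εI_M` is invertible, and `K + εI_H ≥ 0` iff
`S + εI_N − Γ (T + εI_M)⁻¹ Γ* ≥ 0`. -/
theorem stmt_3
    {H : Type*} [NormedAddCommGroup H] [InnerProductSpace ℂ H] [CompleteSpace H]
    (K : H →L[ℂ] H) (hKsa : IsSelfAdjoint K)
    (M : Submodule ℂ H) [CompleteSpace M]
    (T : M →L[ℂ] M) (Γ : M →L[ℂ] Mᗮ) (S : Mᗮ →L[ℂ] Mᗮ)
    (hT : T = (Submodule.orthogonalProjectionOnto M).comp (K.comp M.subtypeL))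
    (hΓ : Γ = (Submodule.orthogonalProjectionOnto Mᗮ).comp (K.comp M.subtypeL))
    (hS : S = (Submodule.orthogonalProjectionOnto Mᗮ).comp (K.comp Mᗮ.subtypeL))
    (hTpos : T.IsPositive) :
    ∀ ε : ℝ, 0 < ε →
      IsUnit (T + (ε : ℂ) • (1 : M →L[ℂ] M)) ∧
        ((K + (ε : ℂ) • (1 : H →L[ℂ] H)).IsPositive ↔
          (S + (ε : ℂ) • (1 : Mᗮ →L[ℂ] Mᗮ) -
            Γ.comp ((Ring.inverse (T + (ε : ℂ) • (1 : M →L[ℂ] M))).comp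
              (ContinuousLinearMap.adjoint Γ))).IsPositive) := by
  intro ε hε
  set Tε : M →L[ℂ] M := T + (ε : ℂ) • (1 : M →L[ℂ] M) with hTε_def
  have hTε_sa : IsSelfAdjoint Tε := (ContinuousLinearMap.isSelfAdjoint_iff_isSymmetric.mpr hTpos.1).add (eps_smul_one_sa ε)
  -- quadratic lower bound for Tε
  have hre : ∀ m : M, ε * ‖m‖ ^ 2 ≤ RCLike.re (inner ℂ (Tε m) m : ℂ) := by
    intro m
    have h1 : (inner ℂ (Tε m) m : ℂ) = inner ℂ (T m) m + (ε : ℂ) * inner ℂ m m := by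
      simp only [hTε_def, ContinuousLinearMap.add_apply, ContinuousLinearMap.smul_apply,
        ContinuousLinearMap.one_apply, inner_add_left, inner_smul_left, Complex.conj_ofReal]
    have h2 : (inner ℂ m m : ℂ) = ((‖m‖ : ℂ) ^ 2) := inner_self_eq_norm_sq_to_K m
    have h3 : RCLike.re ((ε : ℂ) * (inner ℂ m m : ℂ)) = ε * ‖m‖ ^ 2 := by
      rw [h2]; norm_cast
    have h4 := hTpos.2 m
    rw [reApplyInnerSelf_apply] at h4
    rw [h1, map_add, h3]
    linarith
  have hTεpos : ∀ m : M, 0 ≤ RCLike.re (inner ℂ (Tε m) m : ℂ) := fun m =>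
    le_trans (by positivity) (hre m)
  -- bounded below
  have hbound : ∀ m : M, ‖m‖ ≤ ε⁻¹ * ‖Tε m‖ := by
    intro m
    have h1 := hre m
    have h2 : RCLike.re (inner ℂ (Tε m) m : ℂ) ≤ ‖Tε m‖ * ‖m‖ :=
      le_trans (RCLike.re_le_norm _) (norm_inner_le_norm _ _)
    rcases eq_or_lt_of_le (norm_nonneg m) with h | h
    · rw [← h]; positivity
    · rw [inv_mul_eq_div, le_div_iff₀ hε]
      nlinarith
  have hker : LinearMap.ker (Tε : M →ₗ[ℂ] M) = ⊥ := by
    rw [Submodule.eq_bot_iff]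
    intro m hm
    have h := hbound m
    rw [LinearMap.mem_ker, ContinuousLinearMap.coe_coe] at hm
    rw [hm] at h
    simp only [norm_zero, mul_zero] at h
    exact norm_le_zero_iff.mp h
  have hclosed : IsClosed (LinearMap.range (Tε : M →ₗ[ℂ] M) : Set M) := by
    have hanti : AntilipschitzWith (⟨ε⁻¹, by positivity⟩ : NNReal) Tε :=
      ContinuousLinearMap.antilipschitz_of_bound Tε hbound
    exact hanti.isClosed_range Tε.uniformContinuous
  have hrange : LinearMap.range (Tε : M →ₗ[ℂ] M) = ⊤ := by
    have ho : (LinearMap.range (Tε : M →ₗ[ℂ] M))ᗮ = ⊥ := by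
      rw [Submodule.eq_bot_iff]
      intro y hy
      have h0 : (inner ℂ (Tε y) y : ℂ) = 0 :=
        hy (Tε y) (LinearMap.mem_range_self _ y)
      have h1 := hre y
      rw [h0, map_zero] at h1
      have h2 : ‖y‖ ^ 2 ≤ 0 := by
        have h3 : ε * ‖y‖ ^ 2 ≤ ε * 0 := by linarith
        exact (mul_le_mul_iff_right₀ hε).mp h3
      have h4 : ‖y‖ ^ 2 = 0 := le_antisymm h2 (sq_nonneg _)
      exact norm_le_zero_iff.mp ((pow_eq_zero_iff (two_ne_zero)).mp h4).le
    have h1 := Submodule.orthogonal_orthogonal_eq_closure (K := LinearMap.range (Tε : M →ₗ[ℂ] M))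
    rw [ho, Submodule.bot_orthogonal_eq_top] at h1
    have h2 : (LinearMap.range (Tε : M →ₗ[ℂ] M)).topologicalClosure = LinearMap.range (Tε : M →ₗ[ℂ] M) :=
      SetLike.ext' (by rw [Submodule.topologicalClosure_coe, hclosed.closure_eq])
    rw [← h2, ← h1]
  -- Tε is a unit
  let e : M ≃L[ℂ] M := ContinuousLinearEquiv.ofBijective Tε hker hrange
  have he : ∀ y, e y = Tε y := fun y =>
    congrFun (ContinuousLinearEquiv.coeFn_ofBijective Tε hker hrange) y
  have hu : IsUnit Tε := by
    refine ⟨⟨Tε, (e.symm : M →L[ℂ] M), ?_, ?_⟩, rfl⟩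
    · refine ContinuousLinearMap.ext fun x => ?_
      show Tε (e.symm x) = x
      rw [← he]; exact e.apply_symm_apply x
    · refine ContinuousLinearMap.ext fun x => ?_
      show e.symm (Tε x) = x
      rw [← he]; exact e.symm_apply_apply x
  refine ⟨hu, ?_⟩
  -- inverse facts
  set Ti : M →L[ℂ] M := Ring.inverse Tε with hTi_def
  have hTiTε : Ti * Tε = 1 := Ring.inverse_mul_cancel Tε hu
  have hTεTi : Tε * Ti = 1 := Ring.mul_inverse_cancel Tε hu
  have hTi_sa : IsSelfAdjoint Ti := by
    rw [ContinuousLinearMap.isSelfAdjoint_iff']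
    have hc : Tε.comp Ti = 1 := hTεTi
    have h0 : ContinuousLinearMap.adjoint (Tε.comp Ti)
        = ContinuousLinearMap.adjoint (1 : M →L[ℂ] M) := congrArg _ hc
    have hadj1 : ContinuousLinearMap.adjoint (1 : M →L[ℂ] M) = 1 := by
      rw [ContinuousLinearMap.one_def, ContinuousLinearMap.adjoint_id,
        ← ContinuousLinearMap.one_def]
    rw [ContinuousLinearMap.adjoint_comp, hTε_sa.adjoint_eq, hadj1] at h0
    have h1 : ContinuousLinearMap.adjoint Ti * Tε = 1 := h0
    calc ContinuousLinearMap.adjoint Ti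
        = ContinuousLinearMap.adjoint Ti * (Tε * Ti) := by rw [hTεTi, mul_one]
      _ = (ContinuousLinearMap.adjoint Ti * Tε) * Ti := (mul_assoc _ _ _).symm
      _ = Ti := by rw [h1, one_mul]
  -- inner ℂ product compressions
  have hK_mm : ∀ a b : M, (inner ℂ (T a) b : ℂ) = inner ℂ (K (a : H)) (b : H) := by
    intro a b
    rw [hT]
    simp only [comp_apply, Submodule.subtypeL_apply]
    rw [Submodule.inner_orthogonalProjectionOnto_eq_of_mem_right (K := M) b (K (a : H))]
  have hK_mn : ∀ (a : M) (b : Mᗮ), (inner ℂ (Γ a) b : ℂ) = inner ℂ (K (a : H)) (b : H) := by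
    intro a b
    rw [hΓ]
    simp only [comp_apply, Submodule.subtypeL_apply]
    rw [Submodule.inner_orthogonalProjectionOnto_eq_of_mem_right (K := Mᗮ) b (K (a : H))]
  have hK_nn : ∀ a b : Mᗮ, (inner ℂ (S a) b : ℂ) = inner ℂ (K (a : H)) (b : H) := by
    intro a b
    rw [hS]
    simp only [comp_apply, Submodule.subtypeL_apply]
    rw [Submodule.inner_orthogonalProjectionOnto_eq_of_mem_right (K := Mᗮ) b (K (a : H))]
  have hK_nm : ∀ (a : Mᗮ) (b : M),
      (inner ℂ ((ContinuousLinearMap.adjoint Γ) a) b : ℂ) = inner ℂ (K (a : H)) (b : H) := by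
    intro a b
    rw [ContinuousLinearMap.adjoint_inner_left]
    rw [← inner_conj_symm, hK_mn b a, inner_conj_symm]
    exact (hKsa.isSymmetric (a : H) (b : H)).symm
  have hmn0 : ∀ (a : M) (b : Mᗮ), (inner ℂ (a : H) (b : H) : ℂ) = 0 := fun a b =>
    (Submodule.mem_orthogonal M (b : H)).1 b.2 (a : H) a.2
  have hnm0 : ∀ (a : Mᗮ) (b : M), (inner ℂ (a : H) (b : H) : ℂ) = 0 := fun a b => by
    rw [← inner_conj_symm, hmn0 b a, map_zero]
  set R : Mᗮ →L[ℂ] Mᗮ := S + (ε : ℂ) • (1 : Mᗮ →L[ℂ] Mᗮ) -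
      Γ.comp (Ti.comp (ContinuousLinearMap.adjoint Γ)) with hR_def
  -- the key algebraic identity
  have key : ∀ (m : M) (n : Mᗮ),
      (inner ℂ ((K + (ε : ℂ) • (1 : H →L[ℂ] H)) ((m : H) + (n : H))) ((m : H) + (n : H)) : ℂ)
        = inner ℂ (Tε (m + Ti ((ContinuousLinearMap.adjoint Γ) n)))
            (m + Ti ((ContinuousLinearMap.adjoint Γ) n)) + inner ℂ (R n) n := by
    intro m n
    set w : M := Ti ((ContinuousLinearMap.adjoint Γ) n) with hw
    have hTεw : Tε w = (ContinuousLinearMap.adjoint Γ) n := by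
      rw [hw, ← ContinuousLinearMap.mul_apply, hTεTi, ContinuousLinearMap.one_apply]
    -- LHS
    have hL : (inner ℂ ((K + (ε : ℂ) • (1 : H →L[ℂ] H)) ((m : H) + (n : H)))
        ((m : H) + (n : H)) : ℂ)
        = inner ℂ (T m) m + inner ℂ (Γ m) n + inner ℂ ((ContinuousLinearMap.adjoint Γ) n) m
          + inner ℂ (S n) n
          + (ε : ℂ) * ((inner ℂ (m : H) (m : H) : ℂ) + (inner ℂ (n : H) (n : H) : ℂ)) := by
      simp only [ContinuousLinearMap.add_apply, ContinuousLinearMap.smul_apply,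
        ContinuousLinearMap.one_apply, map_add, inner_add_left, inner_add_right,
        inner_smul_left, Complex.conj_ofReal]
      rw [← hK_mm m m, ← hK_mn m n, ← hK_nm n m, ← hK_nn n n, hmn0 m n, hnm0 n m]
      ring
    -- RHS pieces
    have hR1 : (inner ℂ (Tε (m + w)) (m + w) : ℂ)
        = inner ℂ (Tε m) m + inner ℂ (Γ m) n + inner ℂ ((ContinuousLinearMap.adjoint Γ) n) m
          + inner ℂ ((ContinuousLinearMap.adjoint Γ) n) w := by
      rw [map_add, inner_add_left, inner_add_right, inner_add_right, hTεw]
      have h1 : (inner ℂ (Tε m) w : ℂ) = inner ℂ (Γ m) n := by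
        have hs : (inner ℂ (Tε m) w : ℂ) = inner ℂ m (Tε w) := hTε_sa.isSymmetric m w
        rw [hs, hTεw, ContinuousLinearMap.adjoint_inner_right]
      rw [h1]
      ring
    have hR2 : (inner ℂ (R n) n : ℂ)
        = inner ℂ (S n) n + (ε : ℂ) * (inner ℂ n n : ℂ)
          - inner ℂ ((ContinuousLinearMap.adjoint Γ) n) w := by
      rw [hR_def]
      simp only [ContinuousLinearMap.sub_apply, ContinuousLinearMap.add_apply,
        ContinuousLinearMap.smul_apply, ContinuousLinearMap.one_apply, comp_apply,
        inner_sub_left, inner_add_left, inner_smul_left, Complex.conj_ofReal]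
      have h2 : (inner ℂ (Γ (Ti ((ContinuousLinearMap.adjoint Γ) n))) n : ℂ)
          = inner ℂ ((ContinuousLinearMap.adjoint Γ) n) w := by
        calc (inner ℂ (Γ (Ti ((ContinuousLinearMap.adjoint Γ) n))) n : ℂ)
            = inner ℂ (Ti ((ContinuousLinearMap.adjoint Γ) n))
                ((ContinuousLinearMap.adjoint Γ) n) :=
              (ContinuousLinearMap.adjoint_inner_right Γ _ _).symm
          _ = inner ℂ ((ContinuousLinearMap.adjoint Γ) n)
                (Ti ((ContinuousLinearMap.adjoint Γ) n)) :=
              hTi_sa.isSymmetric _ _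
          _ = inner ℂ ((ContinuousLinearMap.adjoint Γ) n) w := rfl
      rw [h2]
    have hTεmm : (inner ℂ (Tε m) m : ℂ) = inner ℂ (T m) m + (ε : ℂ) * (inner ℂ m m : ℂ) := by
      simp only [hTε_def, ContinuousLinearMap.add_apply, ContinuousLinearMap.smul_apply,
        ContinuousLinearMap.one_apply, inner_add_left, inner_smul_left, Complex.conj_ofReal]
    rw [hL, hR1, hR2, hTεmm]
    simp only [Submodule.coe_inner]
    ring
  -- the equivalence
  constructor
  · intro hKpos
    constructor
    · -- self-adjointness of R
      have hS_sa : IsSelfAdjoint S := by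
        rw [ContinuousLinearMap.isSelfAdjoint_iff_isSymmetric]
        intro a b
        show (inner ℂ (S a) b : ℂ) = inner ℂ a (S b)
        have hr : (inner ℂ a (S b) : ℂ) = inner ℂ (K (a : H)) (b : H) :=
          calc (inner ℂ a (S b) : ℂ) = starRingEnd ℂ (inner ℂ (S b) a) :=
                (inner_conj_symm _ _).symm
            _ = starRingEnd ℂ (inner ℂ (K (b : H)) (a : H)) := by rw [hK_nn b a]
            _ = inner ℂ (a : H) (K (b : H)) := inner_conj_symm _ _
            _ = inner ℂ (K (a : H)) (b : H) := (hKsa.isSymmetric (a : H) (b : H)).symm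
        rw [hK_nn a b, hr]
      have hComp_sa : IsSelfAdjoint (Γ.comp (Ti.comp (ContinuousLinearMap.adjoint Γ))) := by
        rw [ContinuousLinearMap.isSelfAdjoint_iff']
        rw [ContinuousLinearMap.adjoint_comp, ContinuousLinearMap.adjoint_comp,
          ContinuousLinearMap.adjoint_adjoint, hTi_sa.adjoint_eq]
        ext x; rfl
      exact ((hS_sa.add (eps_smul_one_sa ε)).sub hComp_sa).isSymmetric
    · intro n
      have hk := key (-(Ti ((ContinuousLinearMap.adjoint Γ) n))) n
      have h0 : -(Ti ((ContinuousLinearMap.adjoint Γ) n))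
          + Ti ((ContinuousLinearMap.adjoint Γ) n) = 0 := neg_add_cancel _
      rw [h0, map_zero, inner_zero_left, zero_add] at hk
      rw [reApplyInnerSelf_apply, ← hk, ← reApplyInnerSelf_apply]
      exact hKpos.2 _
  · intro hRpos
    constructor
    · exact (hKsa.add (eps_smul_one_sa ε)).isSymmetric
    · intro x
      have hx : ((M.orthogonalProjectionOnto x : H) + (Mᗮ.orthogonalProjectionOnto x : H)) = x :=
        Submodule.starProjection_add_starProjection_orthogonal (K := M) x
      have hk := key (M.orthogonalProjectionOnto x) (Mᗮ.orthogonalProjectionOnto x)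
      rw [hx] at hk
      rw [reApplyInnerSelf_apply, hk, map_add]
      have h1 := hTεpos (M.orthogonalProjectionOnto x
        + Ti ((ContinuousLinearMap.adjoint Γ) (Mᗮ.orthogonalProjectionOnto x)))
      have h2 := hRpos.2 (Mᗮ.orthogonalProjectionOnto x)
      rw [reApplyInnerSelf_apply] at h2
      linarith
end

section
/- Let K be a bounded non-negative self-adjoint operator on a complex Hilbert space H, let M be a closed subspace of H, N = M^⊥, and let T = P_M K|_M, Γ = P_N K|_M, S = P_N K|_N be the compressions of K. Then for every ε > 0 the operator K + εI_H is invertible on H, the compression Λ_{1,ε} = P_N (K + εI_H)^{-1}|_N is an invertible operator on N, and Γ (T + εI_M)^{-1} Γ* = S + εI_N − Λ_{1,ε}^{-1}. -/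
open ContinuousLinearMap

local notation "⟪" x ", " y "⟫" => @inner ℂ _ _ x y

lemma coercive_isUnit {E : Type*} [NormedAddCommGroup E] [InnerProductSpace ℂ E]
    [CompleteSpace E] (A : E →L[ℂ] E) {c : ℝ} (hc : 0 < c)
    (hco : ∀ x : E, c * ‖x‖ ^ 2 ≤ (⟪A x, x⟫).re) : IsUnit A := by
  have hbound : ∀ x : E, ‖x‖ ≤ (⟨c⁻¹, by positivity⟩ : NNReal) * ‖A x‖ := by
    intro x
    show ‖x‖ ≤ c⁻¹ * ‖A x‖
    have h1 : c * ‖x‖ ^ 2 ≤ ‖A x‖ * ‖x‖ := by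
      refine (hco x).trans ?_
      calc (⟪A x, x⟫).re ≤ ‖⟪A x, x⟫‖ := Complex.re_le_norm _
        _ ≤ ‖A x‖ * ‖x‖ := norm_inner_le_norm _ _
    rcases eq_or_ne x 0 with rfl | hx
    · simp
    · have hxpos : 0 < ‖x‖ := norm_pos_iff.mpr hx
      rw [inv_mul_eq_div, le_div_iff₀ hc]
      nlinarith [h1]
  have hanti : AntilipschitzWith (⟨c⁻¹, by positivity⟩ : NNReal) A :=
    A.antilipschitz_of_bound hbound
  have hinj : A.ker = ⊥ := by
    exact LinearMap.ker_eq_bot.mpr hanti.injective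
  have hcs : CompleteSpace A.range := hanti.completeSpace_range_clm
  have hsurj : A.range = ⊤ := by
    rw [← Submodule.orthogonal_eq_bot_iff]
    rw [Submodule.eq_bot_iff]
    intro v hv
    have h0 : ⟪A v, v⟫ = 0 := (Submodule.mem_orthogonal _ v).mp hv _ ⟨v, rfl⟩
    have h1 : c * ‖v‖ ^ 2 ≤ 0 := by
      have := hco v; rw [h0] at this; simpa using this
    by_contra hvne
    have h2 : 0 < c * ‖v‖ ^ 2 := mul_pos hc (pow_pos (norm_pos_iff.mpr hvne) 2)
    linarith
  let e := ContinuousLinearEquiv.ofBijective A hinj hsurj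
  refine ⟨⟨A, (e.symm : E →L[ℂ] E), ?_, ?_⟩, rfl⟩
  · ext x
    have : A (e.symm x) = e (e.symm x) := by
      rw [ContinuousLinearEquiv.coeFn_ofBijective]
    simp [ContinuousLinearMap.mul_apply, this]
  · ext x
    have : e.symm (A x) = e.symm (e x) := by
      rw [ContinuousLinearEquiv.coeFn_ofBijective]
    simp [ContinuousLinearMap.mul_apply, this]

/-- Let `K ≥ 0` be a bounded self-adjoint operator on `H`, `M` a closed
subspace, `N = Mᗮ`, with compressions `T = P_M K|_M`, `Γ = P_N K|_M`, `S = P_N K|_N`. Then for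
every `ε > 0` the operator `K + εI` is invertible, the compression
`Λ_{1,ε} = P_N (K + εI)⁻¹|_N` is invertible on `N`, and
`Γ (T + εI_M)⁻¹ Γ* = S + εI_N − Λ_{1,ε}⁻¹`. -/
theorem stmt_5
    {H : Type*} [NormedAddCommGroup H] [InnerProductSpace ℂ H] [CompleteSpace H]
    (K : H →L[ℂ] H) (hK : K.IsPositive)
    (M : Submodule ℂ H) [CompleteSpace M]
    (T : M →L[ℂ] M) (Γ : M →L[ℂ] Mᗮ) (S : Mᗮ →L[ℂ] Mᗮ)
    (hT : T = (Submodule.orthogonalProjection M).comp (K.comp M.subtypeL))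
    (hΓ : Γ = (Submodule.orthogonalProjection Mᗮ).comp (K.comp M.subtypeL))
    (hS : S = (Submodule.orthogonalProjection Mᗮ).comp (K.comp Mᗮ.subtypeL)) :
    ∀ ε : ℝ, 0 < ε →
      IsUnit (K + (ε : ℂ) • (1 : H →L[ℂ] H)) ∧
      IsUnit ((Submodule.orthogonalProjection Mᗮ).comp
        ((Ring.inverse (K + (ε : ℂ) • (1 : H →L[ℂ] H))).comp Mᗮ.subtypeL)) ∧
      Γ.comp ((Ring.inverse (T + (ε : ℂ) • (1 : M →L[ℂ] M))).comp
          (ContinuousLinearMap.adjoint Γ)) =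
        S + (ε : ℂ) • (1 : Mᗮ →L[ℂ] Mᗮ) -
          Ring.inverse ((Submodule.orthogonalProjection Mᗮ).comp
            ((Ring.inverse (K + (ε : ℂ) • (1 : H →L[ℂ] H))).comp Mᗮ.subtypeL)) := by
  intro ε hε
  set L : H →L[ℂ] H := K + (ε : ℂ) • 1 with hLdef
  set A : M →L[ℂ] M := T + (ε : ℂ) • 1 with hAdef
  set Γs : Mᗮ →L[ℂ] M := ContinuousLinearMap.adjoint Γ with hΓsdef
  -- coercivity of L
  have hLco : ∀ x : H, ε * ‖x‖ ^ 2 ≤ (⟪L x, x⟫).re := by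
    intro x
    have h1 : ⟪L x, x⟫ = ⟪K x, x⟫ + (ε : ℂ) * ⟪x, x⟫ := by
      rw [hLdef]
      rw [ContinuousLinearMap.add_apply, ContinuousLinearMap.smul_apply,
        ContinuousLinearMap.one_apply, inner_add_left, inner_smul_left]
      simp
    have h2 : 0 ≤ (⟪K x, x⟫).re := hK.2 x
    have h3 : ((ε : ℂ) * ⟪x, x⟫).re = ε * ‖x‖ ^ 2 := by
      simp [Complex.mul_re, inner_self_eq_norm_sq_to_K, ← Complex.ofReal_pow]
    rw [h1, Complex.add_re, h3]
    linarith
  have hL : IsUnit L := coercive_isUnit L hε hLco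
  -- coercivity of A
  have hAco : ∀ m : M, ε * ‖m‖ ^ 2 ≤ (⟪A m, m⟫).re := by
    intro m
    have h1 : ⟪A m, m⟫ = ⟪T m, m⟫ + (ε : ℂ) * ⟪m, m⟫ := by
      rw [hAdef]
      rw [ContinuousLinearMap.add_apply, ContinuousLinearMap.smul_apply,
        ContinuousLinearMap.one_apply, inner_add_left, inner_smul_left]
      simp
    have h2 : ⟪T m, m⟫ = ⟪K (m : H), (m : H)⟫ := by
      rw [hT]
      simp
    have h3 : 0 ≤ (⟪K (m : H), (m : H)⟫).re := hK.2 (m : H)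
    have h4 : ((ε : ℂ) * ⟪m, m⟫).re = ε * ‖m‖ ^ 2 := by
      simp [Complex.mul_re, inner_self_eq_norm_sq_to_K, ← Complex.ofReal_pow]
    rw [h1, Complex.add_re, h4, h2]
    linarith
  have hA : IsUnit A := coercive_isUnit A hε hAco
  -- adjoint of Γ
  have hΓs : Γs = (Submodule.orthogonalProjection M).comp (K.comp Mᗮ.subtypeL) := by
    rw [hΓsdef, hΓ, adjoint_comp, adjoint_comp, Submodule.adjoint_subtypeL,
      Submodule.adjoint_orthogonalProjection, hK.isSelfAdjoint.adjoint_eq, comp_assoc]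
  set B : Mᗮ →L[ℂ] Mᗮ := S + (ε : ℂ) • 1 with hBdef
  set X : Mᗮ →L[ℂ] Mᗮ := B - Γ.comp ((Ring.inverse A).comp Γs) with hXdef
  set Λ : Mᗮ →L[ℂ] Mᗮ :=
    (Submodule.orthogonalProjection Mᗮ).comp ((Ring.inverse L).comp Mᗮ.subtypeL) with hΛdef
  -- key pointwise computation
  have key : ∀ n : Mᗮ, L ((n : H) - (Ring.inverse A (Γs n) : H)) = ((X n : Mᗮ) : H) := by
    intro n
    set a : M := Ring.inverse A (Γs n) with hadef
    have e1 : (Γs n : H) = (Submodule.orthogonalProjection M (K (n : H)) : H) := by rw [hΓs]; rfl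
    have e2 : (S n : H) = (Submodule.orthogonalProjection Mᗮ (K (n : H)) : H) := by rw [hS]; rfl
    have e3 : (T a : H) = (Submodule.orthogonalProjection M (K (a : H)) : H) := by rw [hT]; rfl
    have e4 : (Γ a : H) = (Submodule.orthogonalProjection Mᗮ (K (a : H)) : H) := by rw [hΓ]; rfl
    have h1 : K (n : H) = (Γs n : H) + (S n : H) := by
      rw [e1, e2]; exact (M.starProjection_add_starProjection_orthogonal _).symm
    have h2 : K (a : H) = (T a : H) + (Γ a : H) := by
      rw [e3, e4]; exact (M.starProjection_add_starProjection_orthogonal _).symm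
    have h3 : A a = Γs n := by
      rw [hadef, ← ContinuousLinearMap.mul_apply, Ring.mul_inverse_cancel A hA,
        ContinuousLinearMap.one_apply]
    have h4 : (T a : H) + (ε : ℂ) • (a : H) = (Γs n : H) := by
      have : T a + (ε : ℂ) • a = Γs n := by
        rw [← h3, hAdef]; simp
      calc (T a : H) + (ε : ℂ) • (a : H) = ((T a + (ε : ℂ) • a : M) : H) := by norm_cast
        _ = (Γs n : H) := by rw [this]
    have h5 : ((X n : Mᗮ) : H) = (S n : H) + (ε : ℂ) • (n : H) - (Γ a : H) := by
      rw [hXdef, hBdef]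
      push_cast [ContinuousLinearMap.sub_apply, ContinuousLinearMap.add_apply,
        ContinuousLinearMap.smul_apply, ContinuousLinearMap.one_apply,
        ContinuousLinearMap.comp_apply]
      module
    have h6 : L ((n : H) - (a : H)) =
        K (n : H) - K (a : H) + ((ε : ℂ) • (n : H) - (ε : ℂ) • (a : H)) := by
      rw [hLdef]; simp [smul_sub]
    rw [h6, h1, h2, h5, ← h4]
    module
  -- Λ ∘ X = id pointwise
  have hΛX : ∀ n : Mᗮ, Λ (X n) = n := by
    intro n
    have h1 : Ring.inverse L ((X n : Mᗮ) : H) = (n : H) - (Ring.inverse A (Γs n) : H) := by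
      rw [← key n, ← ContinuousLinearMap.mul_apply, Ring.inverse_mul_cancel L hL,
        ContinuousLinearMap.one_apply]
    have h2 : Λ (X n) = Submodule.orthogonalProjection Mᗮ (Ring.inverse L ((X n : Mᗮ) : H)) := by
      rw [hΛdef]; rfl
    rw [h2, h1, map_sub]
    rw [Submodule.orthogonalProjectionOnto_mem_subspace_eq_self,
      Submodule.orthogonalProjectionOnto_apply_of_mem_orthogonal
        (M.le_orthogonal_orthogonal (Ring.inverse A (Γs n)).2)]
    simp
  -- Λ is injective
  have hker : ∀ n : Mᗮ, Λ n = 0 → n = 0 := by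
    intro n hn
    set y : H := Ring.inverse L (n : H) with hydef
    have hLy : L y = (n : H) := by
      rw [hydef, ← ContinuousLinearMap.mul_apply, Ring.mul_inverse_cancel L hL,
        ContinuousLinearMap.one_apply]
    have hy : y ∈ (Mᗮ)ᗮ := by
      have : Submodule.orthogonalProjection Mᗮ y = 0 := hn
      exact Submodule.orthogonalProjectionOnto_eq_zero_iff.mp this
    have h0 : ⟪(n : H), y⟫ = 0 := hy (n : H) n.2
    have h1 : ε * ‖y‖ ^ 2 ≤ 0 := by
      have := hLco y
      rw [hLy, h0] at this
      simpa using this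
    have hy0 : y = 0 := by
      by_contra hne
      have : 0 < ε * ‖y‖ ^ 2 := mul_pos hε (pow_pos (norm_pos_iff.mpr hne) 2)
      linarith
    have : (n : H) = 0 := by rw [← hLy, hy0, map_zero]
    exact Subtype.coe_injective (by simpa using this)
  have hinj : Function.Injective Λ := by
    intro n1 n2 h
    have := hker (n1 - n2) (by rw [map_sub, h, sub_self])
    exact sub_eq_zero.mp this
  have hΛXop : Λ * X = 1 := by
    apply ContinuousLinearMap.ext
    intro n
    rw [ContinuousLinearMap.mul_apply, ContinuousLinearMap.one_apply]
    exact hΛX n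
  have hXΛop : X * Λ = 1 := by
    apply ContinuousLinearMap.ext
    intro n
    rw [ContinuousLinearMap.mul_apply, ContinuousLinearMap.one_apply]
    apply hinj
    exact hΛX (Λ n)
  have hΛunit : IsUnit Λ := ⟨⟨Λ, X, hΛXop, hXΛop⟩, rfl⟩
  have hRinv : Ring.inverse Λ = X := Ring.inverse_unit ⟨Λ, X, hΛXop, hXΛop⟩
  refine ⟨hL, hΛunit, ?_⟩
  rw [hRinv, hXdef, hBdef]
  abel
end

section
/- Let M and N be complex Hilbert spaces and H = M ⊕ N. Let T be a bounded self-adjoint operator on M with 0 ≤ T ≤ I_M, Γ : M → N a bounded operator, and X a bounded self-adjoint operator on N. Let K_X be the bounded operator on H with block matrix [[T, Γ*],[Γ, X]]. Then K_X is a non-negative contraction (0 ≤ K_X ≤ I_H) if and only if for every ε > 0 both of the following hold: Γ (T + εI_M)^{-1} Γ* ≤ X + εI_N, and Γ ((1+ε)I_M − T)^{-1} Γ* ≤ (1+ε)I_N − X. -/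
open ContinuousLinearMap RCLike
open scoped InnerProductSpace

/-- The block operator `[[T, Γ*],[Γ, X]]` on `H = M ⊕₂ N`, sending `(u, v)` to
`(Tu + Γ*v, Γu + Xv)`. -/
noncomputable def blockOp
    {M N : Type*} [NormedAddCommGroup M] [InnerProductSpace ℂ M] [CompleteSpace M]
    [NormedAddCommGroup N] [InnerProductSpace ℂ N] [CompleteSpace N]
    (T : M →L[ℂ] M) (Γ : M →L[ℂ] N) (X : N →L[ℂ] N) :
    WithLp 2 (M × N) →L[ℂ] WithLp 2 (M × N) :=
  ((WithLp.prodContinuousLinearEquiv 2 ℂ M N).symm :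
      M × N →L[ℂ] WithLp 2 (M × N)).comp <|
    (((T.comp (ContinuousLinearMap.fst ℂ M N) +
        (ContinuousLinearMap.adjoint Γ).comp (ContinuousLinearMap.snd ℂ M N)).prod
      (Γ.comp (ContinuousLinearMap.fst ℂ M N) +
        X.comp (ContinuousLinearMap.snd ℂ M N)))).comp
      (WithLp.prodContinuousLinearEquiv 2 ℂ M N : WithLp 2 (M × N) →L[ℂ] M × N)

section Aux

variable {M N : Type*} [NormedAddCommGroup M] [InnerProductSpace ℂ M] [CompleteSpace M]
    [NormedAddCommGroup N] [InnerProductSpace ℂ N] [CompleteSpace N]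

lemma aux_fst_equiv_symm (u : M) (v : N) :
    ((WithLp.equiv 2 (M × N)).symm (u, v)).fst = u := rfl

lemma aux_snd_equiv_symm (u : M) (v : N) :
    ((WithLp.equiv 2 (M × N)).symm (u, v)).snd = v := rfl

lemma aux_sa_inverse (A : M →L[ℂ] M) (hA : IsSelfAdjoint A) :
    IsSelfAdjoint (Ring.inverse A) := by
  rw [isSelfAdjoint_iff'] at *
  rw [← star_eq_adjoint, ← Ring.inverse_star, star_eq_adjoint, hA]

lemma aux_sa_real_smul (r : ℝ) : IsSelfAdjoint ((r : ℂ) • (1 : M →L[ℂ] M)) := by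
  rw [IsSelfAdjoint, star_smul, star_one, Complex.star_def, Complex.conj_ofReal]

lemma aux_re_smul (ε : ℝ) (u : M) :
    re ⟪((ε : ℂ) • (1 : M →L[ℂ] M)) u, u⟫_ℂ = ε * ‖u‖ ^ 2 := by
  have h2 : re ⟪u, u⟫_ℂ = ‖u‖ ^ 2 := inner_self_eq_norm_sq u
  simp only [smul_apply, ContinuousLinearMap.one_apply, inner_smul_left, Complex.conj_ofReal,
    RCLike.re_to_complex, Complex.re_ofReal_mul] at h2 ⊢
  rw [h2]

lemma aux_isUnit (ε : ℝ) (hε : 0 < ε) (A : M →L[ℂ] M) (hA : A.IsPositive) :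
    IsUnit (A + (ε : ℂ) • (1 : M →L[ℂ] M)) := by
  apply isUnit_of_forall_le_norm_inner_map _ (c := ⟨ε, hε.le⟩) (by exact_mod_cast hε)
  intro x
  calc ‖x‖ ^ 2 * (⟨ε, hε.le⟩ : NNReal) ≤ re ⟪(A + (ε : ℂ) • 1) x, x⟫_ℂ := by
        have h1 := hA.re_inner_nonneg_left x
        have h2 : re ⟪x, x⟫_ℂ = ‖x‖ ^ 2 := inner_self_eq_norm_sq x
        simp only [add_apply, inner_add_left, smul_apply, ContinuousLinearMap.one_apply, inner_smul_left,
          Complex.conj_ofReal, RCLike.re_to_complex, Complex.add_re,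
          Complex.re_ofReal_mul] at h1 h2 ⊢
        nlinarith
    _ ≤ ‖⟪(A + (ε : ℂ) • 1) x, x⟫_ℂ‖ := re_le_norm _

lemma aux_pos_add (ε : ℝ) (hε : 0 ≤ ε) (A : M →L[ℂ] M) (hA : A.IsPositive) :
    (A + (ε : ℂ) • (1 : M →L[ℂ] M)).IsPositive := by
  refine ⟨isSelfAdjoint_iff_isSymmetric.mp (hA.isSelfAdjoint.add (aux_sa_real_smul ε)), fun x => ?_⟩
  rw [reApplyInnerSelf_apply]
  rw [add_apply, inner_add_left, map_add, aux_re_smul]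
  have := hA.re_inner_nonneg_left x
  nlinarith [sq_nonneg ‖x‖]

/-- The key Schur-complement lemma. -/
lemma aux_schur (A : M →L[ℂ] M) (hA : A.IsPositive) (hAu : IsUnit A)
    (Γ : M →L[ℂ] N) (X : N →L[ℂ] N) (hX : IsSelfAdjoint X) :
    (∀ (u : M) (v : N), 0 ≤ re ⟪A u, u⟫_ℂ + 2 * re ⟪Γ u, v⟫_ℂ + re ⟪X v, v⟫_ℂ) ↔
      (X - Γ.comp ((Ring.inverse A).comp (ContinuousLinearMap.adjoint Γ))).IsPositive := by
  set B := Ring.inverse A with hBdef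
  have hBsa : IsSelfAdjoint B := aux_sa_inverse A hA.isSelfAdjoint
  have hABeq : ∀ y : N, A (B (ContinuousLinearMap.adjoint Γ y)) =
      ContinuousLinearMap.adjoint Γ y := by
    intro y
    have hAB : A * B = 1 := Ring.mul_inverse_cancel A hAu
    calc A (B (ContinuousLinearMap.adjoint Γ y))
        = (A * B) (ContinuousLinearMap.adjoint Γ y) := rfl
      _ = ContinuousLinearMap.adjoint Γ y := by rw [hAB, ContinuousLinearMap.one_apply]
  have hSsa : IsSelfAdjoint
      (X - Γ.comp (B.comp (ContinuousLinearMap.adjoint Γ))) := by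
    refine hX.sub ?_
    rw [isSelfAdjoint_iff', adjoint_comp, adjoint_comp, adjoint_adjoint,
      isSelfAdjoint_iff'.mp hBsa, ← comp_assoc]
  have hAsym : ∀ (a b : M), ⟪A a, b⟫_ℂ = ⟪a, A b⟫_ℂ := fun a b => by
    nth_rewrite 1 [← isSelfAdjoint_iff'.mp hA.isSelfAdjoint]
    exact adjoint_inner_left A b a
  have key : ∀ (u : M) (v : N),
      re ⟪A u, u⟫_ℂ + 2 * re ⟪Γ u, v⟫_ℂ + re ⟪X v, v⟫_ℂ =
      re ⟪A (u + B (ContinuousLinearMap.adjoint Γ v)),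
          u + B (ContinuousLinearMap.adjoint Γ v)⟫_ℂ +
        re ⟪(X - Γ.comp (B.comp (ContinuousLinearMap.adjoint Γ))) v, v⟫_ℂ := by
    intro u v
    set w := B (ContinuousLinearMap.adjoint Γ v) with hw
    have e1 : ⟪A (u + w), u + w⟫_ℂ =
        ⟪A u, u⟫_ℂ + ⟪A u, w⟫_ℂ + ⟪A w, u⟫_ℂ + ⟪A w, w⟫_ℂ := by
      rw [map_add, inner_add_left, inner_add_right, inner_add_right]; ring
    have hAw : A w = ContinuousLinearMap.adjoint Γ v := hABeq v
    have e2 : ⟪A u, w⟫_ℂ = ⟪Γ u, v⟫_ℂ := by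
      rw [hAsym u w, hAw, adjoint_inner_right]
    have e3 : re ⟪A w, u⟫_ℂ = re ⟪Γ u, v⟫_ℂ := by
      rw [inner_re_symm, hAw, adjoint_inner_right]
    have e4 : re ⟪(Γ.comp (B.comp (ContinuousLinearMap.adjoint Γ))) v, v⟫_ℂ =
        re ⟪A w, w⟫_ℂ := by
      have : (Γ.comp (B.comp (ContinuousLinearMap.adjoint Γ))) v = Γ w := rfl
      rw [this, ← adjoint_inner_right, ← hAw, inner_re_symm]
    have e5 : re ⟪(X - Γ.comp (B.comp (ContinuousLinearMap.adjoint Γ))) v, v⟫_ℂ =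
        re ⟪X v, v⟫_ℂ - re ⟪A w, w⟫_ℂ := by
      rw [sub_apply, inner_sub_left, map_sub, e4]
    rw [e5, e1]
    simp only [map_add]
    rw [e2, e3]
    ring
  constructor
  · intro h
    refine ⟨isSelfAdjoint_iff_isSymmetric.mp hSsa, fun v => ?_⟩
    have h0 := h (-(B (ContinuousLinearMap.adjoint Γ v))) v
    rw [key] at h0
    rw [reApplyInnerSelf_apply]
    simpa [inner_sub_left, sub_nonneg] using h0
  · intro hS u v
    rw [key u v]
    exact add_nonneg (hA.re_inner_nonneg_left _) (hS.re_inner_nonneg_left v)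

lemma aux_block_re (T : M →L[ℂ] M) (Γ : M →L[ℂ] N) (X : N →L[ℂ] N)
    (x : WithLp 2 (M × N)) :
    re ⟪blockOp T Γ X x, x⟫_ℂ =
      re ⟪T x.fst, x.fst⟫_ℂ + 2 * re ⟪Γ x.fst, x.snd⟫_ℂ + re ⟪X x.snd, x.snd⟫_ℂ := by
  rw [WithLp.prod_inner_apply]
  simp only [WithLp.ofLp_fst, WithLp.ofLp_snd]
  have h1 : (blockOp T Γ X x).fst = T x.fst + ContinuousLinearMap.adjoint Γ x.snd := rfl
  have h2 : (blockOp T Γ X x).snd = Γ x.fst + X x.snd := rfl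
  rw [h1, h2, inner_add_left, inner_add_left, adjoint_inner_left]
  simp only [map_add]
  rw [inner_re_symm x.snd (Γ x.fst)]
  ring

lemma aux_block_sa (T : M →L[ℂ] M) (Γ : M →L[ℂ] N) (X : N →L[ℂ] N)
    (hT : IsSelfAdjoint T) (hX : IsSelfAdjoint X) :
    IsSelfAdjoint (blockOp T Γ X) := by
  rw [isSelfAdjoint_iff_isSymmetric]
  intro x y
  have hTs : ∀ (a b : M), ⟪T a, b⟫_ℂ = ⟪a, T b⟫_ℂ := fun a b => by
    nth_rewrite 1 [← isSelfAdjoint_iff'.mp hT]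
    exact adjoint_inner_left T b a
  have hXs : ∀ (a b : N), ⟪X a, b⟫_ℂ = ⟪a, X b⟫_ℂ := fun a b => by
    nth_rewrite 1 [← isSelfAdjoint_iff'.mp hX]
    exact adjoint_inner_left X b a
  show ⟪blockOp T Γ X x, y⟫_ℂ = ⟪x, blockOp T Γ X y⟫_ℂ
  have h1 : (blockOp T Γ X x).fst = T x.fst + ContinuousLinearMap.adjoint Γ x.snd := rfl
  have h2 : (blockOp T Γ X x).snd = Γ x.fst + X x.snd := rfl
  have h3 : (blockOp T Γ X y).fst = T y.fst + ContinuousLinearMap.adjoint Γ y.snd := rfl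
  have h4 : (blockOp T Γ X y).snd = Γ y.fst + X y.snd := rfl
  rw [WithLp.prod_inner_apply, WithLp.prod_inner_apply]
  simp only [WithLp.ofLp_fst, WithLp.ofLp_snd]
  rw [h1, h2, h3, h4,
    inner_add_left, inner_add_left, inner_add_right, inner_add_right,
    adjoint_inner_left, adjoint_inner_right, hTs x.fst y.fst, hXs x.snd y.snd]
  ring

lemma aux_one_sub_re (T : M →L[ℂ] M) (Γ : M →L[ℂ] N) (X : N →L[ℂ] N)
    (x : WithLp 2 (M × N)) :
    re ⟪((1 : WithLp 2 (M × N) →L[ℂ] WithLp 2 (M × N)) - blockOp T Γ X) x, x⟫_ℂ =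
      re ⟪((1 : M →L[ℂ] M) - T) x.fst, x.fst⟫_ℂ +
        2 * re ⟪(-Γ) x.fst, x.snd⟫_ℂ +
        re ⟪((1 : N →L[ℂ] N) - X) x.snd, x.snd⟫_ℂ := by
  rw [sub_apply, ContinuousLinearMap.one_apply, inner_sub_left, map_sub, aux_block_re,
    WithLp.prod_inner_apply]
  simp only [sub_apply, ContinuousLinearMap.one_apply, inner_sub_left, map_sub, map_add, neg_apply,
    inner_neg_left, map_neg, WithLp.ofLp_fst, WithLp.ofLp_snd]
  ring

lemma aux_neg_conj (Γ : M →L[ℂ] N) (B : M →L[ℂ] M) :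
    (-Γ).comp (B.comp (ContinuousLinearMap.adjoint (-Γ))) =
      Γ.comp (B.comp (ContinuousLinearMap.adjoint Γ)) := by
  have : ContinuousLinearMap.adjoint (-Γ) = -ContinuousLinearMap.adjoint Γ :=
    map_neg (ContinuousLinearMap.adjoint : (M →L[ℂ] N) ≃ₗᵢ⋆[ℂ] (N →L[ℂ] M)) Γ
  simp [this, comp_neg, neg_comp]

lemma aux_shift_eq (ε : ℝ) (T : M →L[ℂ] M) :
    (1 + ε : ℂ) • (1 : M →L[ℂ] M) - T = ((1 : M →L[ℂ] M) - T) + (ε : ℂ) • 1 := by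
  have : ((1 + ε : ℂ)) • (1 : M →L[ℂ] M) = 1 + (ε : ℂ) • 1 := by
    rw [add_smul, one_smul]
  rw [this]; abel

end Aux

/-- With `0 ≤ T ≤ I_M`, `Γ : M → N` bounded, `X` self-adjoint on `N`, the
block operator `K_X = [[T, Γ*],[Γ, X]]` on `H = M ⊕ N` satisfies `0 ≤ K_X ≤ I_H` iff for every
`ε > 0` one has `Γ (T + εI_M)⁻¹ Γ* ≤ X + εI_N` and `Γ ((1+ε)I_M − T)⁻¹ Γ* ≤ (1+ε)I_N − X`. -/
theorem stmt_6
    {M N : Type*} [NormedAddCommGroup M] [InnerProductSpace ℂ M] [CompleteSpace M]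
    [NormedAddCommGroup N] [InnerProductSpace ℂ N] [CompleteSpace N]
    (T : M →L[ℂ] M) (hT : T.IsPositive) (hT1 : ((1 : M →L[ℂ] M) - T).IsPositive)
    (Γ : M →L[ℂ] N) (X : N →L[ℂ] N) (hX : IsSelfAdjoint X) :
    ((blockOp T Γ X).IsPositive ∧
        ((1 : WithLp 2 (M × N) →L[ℂ] WithLp 2 (M × N)) - blockOp T Γ X).IsPositive) ↔
      ∀ ε : ℝ, 0 < ε →
        (X + (ε : ℂ) • (1 : N →L[ℂ] N) -
          Γ.comp ((Ring.inverse (T + (ε : ℂ) • (1 : M →L[ℂ] M))).comp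
            (ContinuousLinearMap.adjoint Γ))).IsPositive ∧
        ((1 + ε : ℂ) • (1 : N →L[ℂ] N) - X -
          Γ.comp ((Ring.inverse ((1 + ε : ℂ) • (1 : M →L[ℂ] M) - T)).comp
            (ContinuousLinearMap.adjoint Γ))).IsPositive := by
  constructor
  · rintro ⟨hK, hK1⟩ ε hε
    constructor
    · have hA1pos : (T + (ε : ℂ) • (1 : M →L[ℂ] M)).IsPositive := aux_pos_add ε hε.le T hT
      have hA1u : IsUnit (T + (ε : ℂ) • (1 : M →L[ℂ] M)) := aux_isUnit ε hε T hT
      have hX1sa : IsSelfAdjoint (X + (ε : ℂ) • (1 : N →L[ℂ] N)) :=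
        hX.add (aux_sa_real_smul ε)
      refine (aux_schur _ hA1pos hA1u Γ _ hX1sa).mp fun u v => ?_
      have hq := hK.2 ((WithLp.equiv 2 (M × N)).symm (u, v))
      rw [reApplyInnerSelf_apply, aux_block_re, aux_fst_equiv_symm, aux_snd_equiv_symm] at hq
      rw [add_apply, add_apply, inner_add_left, inner_add_left, map_add, map_add,
        aux_re_smul, aux_re_smul]
      nlinarith [sq_nonneg ‖u‖, sq_nonneg ‖v‖]
    · have heqM := aux_shift_eq ε T
      have heqN := aux_shift_eq ε X
      have hA2pos : ((1 + ε : ℂ) • (1 : M →L[ℂ] M) - T).IsPositive := by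
        rw [heqM]; exact aux_pos_add ε hε.le _ hT1
      have hA2u : IsUnit ((1 + ε : ℂ) • (1 : M →L[ℂ] M) - T) := by
        rw [heqM]; exact aux_isUnit ε hε _ hT1
      have hX2sa : IsSelfAdjoint ((1 + ε : ℂ) • (1 : N →L[ℂ] N) - X) := by
        rw [heqN]; exact (IsSelfAdjoint.sub (IsSelfAdjoint.one _) hX).add (aux_sa_real_smul ε)
      have key := aux_schur _ hA2pos hA2u (-Γ) _ hX2sa
      rw [aux_neg_conj] at key
      refine key.mp fun u v => ?_
      have hq := hK1.2 ((WithLp.equiv 2 (M × N)).symm (u, v))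
      rw [reApplyInnerSelf_apply, aux_one_sub_re, aux_fst_equiv_symm, aux_snd_equiv_symm] at hq
      rw [heqM, heqN, add_apply, add_apply, inner_add_left, inner_add_left, map_add, map_add,
        aux_re_smul, aux_re_smul]
      nlinarith [sq_nonneg ‖u‖, sq_nonneg ‖v‖]
  · intro h
    constructor
    · refine ⟨isSelfAdjoint_iff_isSymmetric.mp (aux_block_sa T Γ X hT.isSelfAdjoint hX), fun x => ?_⟩
      rw [reApplyInnerSelf_apply, aux_block_re]
      have main : ∀ δ : ℝ, 0 < δ →
          0 ≤ (re ⟪T x.fst, x.fst⟫_ℂ + 2 * re ⟪Γ x.fst, x.snd⟫_ℂ +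
              re ⟪X x.snd, x.snd⟫_ℂ) + δ * (‖x.fst‖ ^ 2 + ‖x.snd‖ ^ 2) := by
        intro δ hδ
        have hA1pos := aux_pos_add δ hδ.le T hT
        have hA1u := aux_isUnit δ hδ T hT
        have hX1sa : IsSelfAdjoint (X + (δ : ℂ) • (1 : N →L[ℂ] N)) :=
          hX.add (aux_sa_real_smul δ)
        have hq := (aux_schur _ hA1pos hA1u Γ _ hX1sa).mpr (h δ hδ).1 x.fst x.snd
        rw [add_apply, add_apply, inner_add_left, inner_add_left, map_add, map_add,
          aux_re_smul, aux_re_smul] at hq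
        nlinarith
      refine le_of_forall_sub_le fun ε hε => ?_
      set C := ‖x.fst‖ ^ 2 + ‖x.snd‖ ^ 2 with hC
      have hC0 : 0 ≤ C := by positivity
      have hδ : 0 < ε / (C + 1) := by positivity
      have hm := main _ hδ
      have hle : ε / (C + 1) * C ≤ ε := by
        rw [div_mul_eq_mul_div, div_le_iff₀ (by linarith)]
        nlinarith
      linarith
    · refine ⟨isSelfAdjoint_iff_isSymmetric.mp (IsSelfAdjoint.sub (IsSelfAdjoint.one _) (aux_block_sa T Γ X hT.isSelfAdjoint hX)), fun x => ?_⟩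
      rw [reApplyInnerSelf_apply, aux_one_sub_re]
      have main : ∀ δ : ℝ, 0 < δ →
          0 ≤ (re ⟪((1 : M →L[ℂ] M) - T) x.fst, x.fst⟫_ℂ +
              2 * re ⟪(-Γ) x.fst, x.snd⟫_ℂ +
              re ⟪((1 : N →L[ℂ] N) - X) x.snd, x.snd⟫_ℂ) +
            δ * (‖x.fst‖ ^ 2 + ‖x.snd‖ ^ 2) := by
        intro δ hδ
        have heqM := aux_shift_eq δ T
        have heqN := aux_shift_eq δ X
        have hA2pos : ((1 + δ : ℂ) • (1 : M →L[ℂ] M) - T).IsPositive := by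
          rw [heqM]; exact aux_pos_add δ hδ.le _ hT1
        have hA2u : IsUnit ((1 + δ : ℂ) • (1 : M →L[ℂ] M) - T) := by
          rw [heqM]; exact aux_isUnit δ hδ _ hT1
        have hX2sa : IsSelfAdjoint ((1 + δ : ℂ) • (1 : N →L[ℂ] N) - X) := by
          rw [heqN]; exact (IsSelfAdjoint.sub (IsSelfAdjoint.one _) hX).add (aux_sa_real_smul δ)
        have key := aux_schur _ hA2pos hA2u (-Γ) _ hX2sa
        rw [aux_neg_conj] at key
        have hq := key.mpr (h δ hδ).2 x.fst x.snd
        rw [heqM, heqN, add_apply, add_apply, inner_add_left, inner_add_left,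
          map_add, map_add, aux_re_smul, aux_re_smul] at hq
        nlinarith
      refine le_of_forall_sub_le fun ε hε => ?_
      set C := ‖x.fst‖ ^ 2 + ‖x.snd‖ ^ 2 with hC
      have hC0 : 0 ≤ C := by positivity
      have hδ : 0 < ε / (C + 1) := by positivity
      have hm := main _ hδ
      have hle : ε / (C + 1) * C ≤ ε := by
        rw [div_mul_eq_mul_div, div_le_iff₀ (by linarith)]
        nlinarith
      linarith
end

section
/- For every x₀ ∈ ℝ² the function k ↦ sin²(⟨k, x₀⟩/2)/(|k|²(1+|k|²)) is integrable on ℝ², i.e. ∫_{ℝ²} sin²(⟨k, x₀⟩/2)/(|k|²(1+|k|²)) dk < ∞. -/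
open MeasureTheory

private lemma aux_bound (x₀ k : EuclideanSpace ℝ (Fin 2)) :
    Real.sin ((inner ℝ k x₀ : ℝ) / 2) ^ 2 / (‖k‖ ^ 2 * (1 + ‖k‖ ^ 2)) ≤
      (16 + 4 * ‖x₀‖ ^ 2) * (1 + ‖k‖) ^ (-(4:ℝ)) := by
  have hk : (0:ℝ) ≤ ‖k‖ := norm_nonneg k
  have h1k : (0:ℝ) < 1 + ‖k‖ := by linarith
  have hrw : (1 + ‖k‖ : ℝ) ^ (-(4:ℝ)) = ((1 + ‖k‖) ^ 4)⁻¹ := by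
    rw [show ((4:ℝ)) = ((4:ℕ):ℝ) by norm_num, Real.rpow_neg h1k.le, Real.rpow_natCast]
  rw [hrw]
  have hsin : Real.sin ((inner ℝ k x₀ : ℝ) / 2) ^ 2 ≤ ((inner ℝ k x₀ : ℝ) / 2) ^ 2 :=
    Real.sin_sq_le_sq
  have hinner : |(inner ℝ k x₀ : ℝ)| ≤ ‖k‖ * ‖x₀‖ := abs_real_inner_le_norm k x₀
  have hsin1 : Real.sin ((inner ℝ k x₀ : ℝ) / 2) ^ 2 ≤ 1 := Real.sin_sq_le_one _
  rcases le_total ‖k‖ 1 with h | h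
  · -- small k : use sin² ≤ (⟨k,x₀⟩/2)² ≤ ‖k‖²‖x₀‖²/4
    have hinner2 : ((inner ℝ k x₀ : ℝ) / 2) ^ 2 ≤ ‖k‖ ^ 2 * ‖x₀‖ ^ 2 / 4 := by
      have := sq_le_sq' (neg_le_of_abs_le hinner) (le_of_abs_le hinner)
      rw [div_pow]
      rw [mul_pow] at this
      linarith
    rcases eq_or_lt_of_le hk with h0 | h0
    · simp [← h0]
      positivity
    have hden : (0:ℝ) < ‖k‖ ^ 2 * (1 + ‖k‖ ^ 2) := by positivity
    rw [div_le_iff₀ hden]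
    have h2 : (1 + ‖k‖ : ℝ) ^ 4 ≤ 16 := by
      calc (1 + ‖k‖ : ℝ) ^ 4 ≤ 2 ^ 4 := pow_le_pow_left₀ (by linarith) (by linarith) 4
        _ = 16 := by norm_num
    have h14 : (1:ℝ)/16 ≤ ((1 + ‖k‖) ^ 4)⁻¹ := by
      rw [one_div]
      exact inv_anti₀ (by positivity) h2
    calc Real.sin ((inner ℝ k x₀ : ℝ) / 2) ^ 2 ≤ ‖k‖ ^ 2 * ‖x₀‖ ^ 2 / 4 :=
          le_trans hsin hinner2
      _ ≤ (16 + 4 * ‖x₀‖ ^ 2) * (1/16) * (‖k‖ ^ 2 * (1 + ‖k‖ ^ 2)) := by nlinarith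
      _ ≤ (16 + 4 * ‖x₀‖ ^ 2) * ((1 + ‖k‖) ^ 4)⁻¹ * (‖k‖ ^ 2 * (1 + ‖k‖ ^ 2)) := by
          apply mul_le_mul_of_nonneg_right _ hden.le
          apply mul_le_mul_of_nonneg_left h14 (by positivity)
  · -- large k : use sin² ≤ 1 and ‖k‖²(1+‖k‖²) ≥ (1+‖k‖)^4/16
    have hden : (0:ℝ) < ‖k‖ ^ 2 * (1 + ‖k‖ ^ 2) := by positivity
    have ha : (1 + ‖k‖ : ℝ) ^ 4 ≤ (2 * ‖k‖) ^ 4 :=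
      pow_le_pow_left₀ (by positivity) (by linarith) 4
    calc Real.sin ((inner ℝ k x₀ : ℝ) / 2) ^ 2 / (‖k‖ ^ 2 * (1 + ‖k‖ ^ 2))
        ≤ 1 / (‖k‖ ^ 2 * (1 + ‖k‖ ^ 2)) := by gcongr
      _ ≤ 16 / (1 + ‖k‖) ^ 4 := by
          rw [div_le_div_iff₀ hden (by positivity)]
          nlinarith [sq_nonneg ‖k‖]
      _ ≤ (16 + 4 * ‖x₀‖ ^ 2) / (1 + ‖k‖) ^ 4 := by
          gcongr
          nlinarith [sq_nonneg ‖x₀‖]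
      _ = (16 + 4 * ‖x₀‖ ^ 2) * ((1 + ‖k‖) ^ 4)⁻¹ := by rw [div_eq_mul_inv]

/-- For every `x₀ ∈ ℝ²` the function
`k ↦ sin²(⟨k, x₀⟩/2)/(|k|²(1+|k|²))` is integrable on `ℝ²`, i.e. its Lebesgue integral over
`ℝ²` is finite. -/
theorem stmt_14 (x₀ : EuclideanSpace ℝ (Fin 2)) :
    Integrable (fun k : EuclideanSpace ℝ (Fin 2) =>
      Real.sin ((inner ℝ k x₀ : ℝ) / 2) ^ 2 / (‖k‖ ^ 2 * (1 + ‖k‖ ^ 2))) volume ∧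
    ∫⁻ k : EuclideanSpace ℝ (Fin 2),
      ENNReal.ofReal (Real.sin ((inner ℝ k x₀ : ℝ) / 2) ^ 2 / (‖k‖ ^ 2 * (1 + ‖k‖ ^ 2)))
        ∂volume < ⊤ := by
  have hint : Integrable (fun k : EuclideanSpace ℝ (Fin 2) =>
      Real.sin ((inner ℝ k x₀ : ℝ) / 2) ^ 2 / (‖k‖ ^ 2 * (1 + ‖k‖ ^ 2))) volume := by
    have hg : Integrable (fun k : EuclideanSpace ℝ (Fin 2) =>
        (16 + 4 * ‖x₀‖ ^ 2) * (1 + ‖k‖) ^ (-(4:ℝ))) volume := by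
      apply Integrable.const_mul
      apply integrable_one_add_norm (E := EuclideanSpace ℝ (Fin 2))
      simp
      norm_num
    apply hg.mono'
    · have hc1 : Continuous fun k : EuclideanSpace ℝ (Fin 2) =>
          Real.sin ((inner ℝ k x₀ : ℝ) / 2) ^ 2 :=
        (Real.continuous_sin.comp
          (((continuous_id.inner continuous_const)).div_const 2)).pow 2
      have hc2 : Continuous fun k : EuclideanSpace ℝ (Fin 2) => ‖k‖ ^ 2 * (1 + ‖k‖ ^ 2) :=
        (continuous_norm.pow 2).mul (continuous_const.add (continuous_norm.pow 2))
      exact (hc1.measurable.div hc2.measurable).aestronglyMeasurable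
    · filter_upwards with k
      rw [Real.norm_eq_abs, abs_of_nonneg (by positivity)]
      exact aux_bound x₀ k
  exact ⟨hint, hint.lintegral_lt_top⟩
end

section
/- For every x₀ ∈ ℝ² with x₀ ≠ 0 the function k ↦ sin²(⟨k, x₀⟩/2)/(1+|k|²) is not integrable on ℝ², i.e. ∫_{ℝ²} sin²(⟨k, x₀⟩/2)/(1+|k|²) dk = ∞ (the Lebesgue integral of this non-negative function diverges). -/
open MeasureTheory

open Metric Set in
private lemma aux_div_stmt15 (c : ℝ) (hc : 0 ≤ c) :

    ∫⁻ k : EuclideanSpace ℝ (Fin 2), ENNReal.ofReal (1 / (1 + (‖k‖ + c) ^ 2)) ∂volume = ⊤ := by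
  set B := volume (ball (0 : EuclideanSpace ℝ (Fin 2)) 1) with hB
  have hB0 : B ≠ 0 := (measure_ball_pos _ _ one_pos).ne'
  have hBt : B ≠ ⊤ := measure_ball_lt_top.ne
  set A : ℕ → Set (EuclideanSpace ℝ (Fin 2)) := fun n => ball (0 : EuclideanSpace ℝ (Fin 2)) (2 ^ (n + 1)) \ closedBall 0 (2 ^ n) with hA
  have hAm : ∀ n, MeasurableSet (A n) := fun n =>
    measurableSet_ball.diff measurableSet_closedBall
  have hdim : Module.finrank ℝ (EuclideanSpace ℝ (Fin 2)) = 2 := by simp [finrank_euclideanSpace]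
  -- measure of annuli
  have hAvol : ∀ n, volume (A n) = ENNReal.ofReal (3 * 4 ^ n) * B := by
    intro n
    have h2n : (0:ℝ) ≤ 2 ^ n := by positivity
    have hball : ∀ m : ℕ, volume (ball (0 : EuclideanSpace ℝ (Fin 2)) (2 ^ m)) = ENNReal.ofReal ((4:ℝ) ^ m) * B := by
      intro m
      rw [Measure.addHaar_ball volume (0 : EuclideanSpace ℝ (Fin 2)) (by positivity : (0:ℝ) ≤ 2 ^ m), hdim]
      congr 2
      rw [← pow_mul, show (4:ℝ) = 2 ^ 2 by norm_num, ← pow_mul]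
      ring_nf
    have hsub : closedBall (0 : EuclideanSpace ℝ (Fin 2)) (2 ^ n) ⊆ ball 0 (2 ^ (n + 1)) := by
      apply closedBall_subset_ball
      have : (2:ℝ) ^ n < 2 ^ (n + 1) := by
        apply pow_lt_pow_right₀ one_lt_two (Nat.lt_succ_self n)
      linarith
    rw [hA]
    rw [measure_diff hsub measurableSet_closedBall.nullMeasurableSet
      (by rw [Measure.addHaar_closedBall_eq_addHaar_ball, hball n]
          exact ENNReal.mul_ne_top ENNReal.ofReal_ne_top hBt),
      Measure.addHaar_closedBall_eq_addHaar_ball, hball n, hball (n + 1)]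
    have h4 : ((4:ℝ)) ^ (n + 1) = 3 * 4 ^ n + 4 ^ n := by ring
    rw [h4, ENNReal.ofReal_add (by positivity) (by positivity), add_mul,
      ENNReal.add_sub_cancel_right (ENNReal.mul_ne_top ENNReal.ofReal_ne_top hBt)]
  -- pairwise disjoint
  have hdisj : Pairwise (Function.onFun Disjoint A) := by
    have key : ∀ m n : ℕ, m < n → Disjoint (A m) (A n) := by
      intro m n hmn
      apply Set.disjoint_left.mpr
      intro k hk hk'
      have h1 : ‖k‖ < 2 ^ (m + 1) := by simpa using hk.1
      have h2 : (2:ℝ) ^ n ≤ ‖k‖ := by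
        have := hk'.2; simp [mem_closedBall, dist_zero_right] at this; linarith
      have : (2:ℝ) ^ (m+1) ≤ 2 ^ n := pow_le_pow_right₀ one_le_two hmn
      linarith
    intro m n hmn
    rcases hmn.lt_or_gt with h | h
    · exact key m n h
    · exact (key n m h).symm
  -- lower bound per annulus
  have hlow : ∀ n, ENNReal.ofReal (3 / (4 * (2 + c) ^ 2)) * B ≤
      ∫⁻ k in A n, ENNReal.ofReal (1 / (1 + (‖k‖ + c) ^ 2)) ∂volume := by
    intro n
    have hconst : ∀ k ∈ A n, ENNReal.ofReal (1 / (1 + ((2:ℝ) ^ (n+1) + c) ^ 2)) ≤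
        ENNReal.ofReal (1 / (1 + (‖k‖ + c) ^ 2)) := by
      intro k hk
      have h1 : ‖k‖ < 2 ^ (n + 1) := by simpa using hk.1
      have h0 : (0:ℝ) ≤ ‖k‖ := norm_nonneg k
      apply ENNReal.ofReal_le_ofReal
      apply div_le_div_of_nonneg_left one_pos.le (by positivity)
      nlinarith
    calc ENNReal.ofReal (3 / (4 * (2 + c) ^ 2)) * B
        ≤ ENNReal.ofReal (1 / (1 + ((2:ℝ) ^ (n+1) + c) ^ 2)) * (ENNReal.ofReal (3 * 4 ^ n) * B) := by
          rw [← mul_assoc, ← ENNReal.ofReal_mul (by positivity)]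
          apply mul_le_mul_left (ENNReal.ofReal_le_ofReal ?_)
          rw [div_mul_eq_mul_div, mul_comm]
          have hP : (2:ℝ) ^ (n+1) = 2 * 2 ^ n := by ring
          have h4n : ((4:ℝ)) ^ n = (2 ^ n) ^ 2 := by
            rw [← pow_mul, show (4:ℝ) = 2 ^ 2 by norm_num, ← pow_mul]; ring_nf
          have h2n : (1:ℝ) ≤ 2 ^ n := one_le_pow₀ one_le_two
          rw [div_le_div_iff₀ (by positivity) (by positivity)]
          nlinarith [sq_nonneg ((2:ℝ)^n - 1), sq_nonneg c, mul_nonneg hc (sub_nonneg.mpr h2n),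
            mul_nonneg (mul_nonneg hc hc) (sub_nonneg.mpr (one_le_pow₀ one_le_two (n := n)))]
      _ = ENNReal.ofReal (1 / (1 + ((2:ℝ) ^ (n+1) + c) ^ 2)) * volume (A n) := by rw [hAvol n]
      _ = ∫⁻ _ in A n, ENNReal.ofReal (1 / (1 + ((2:ℝ) ^ (n+1) + c) ^ 2)) ∂volume := by
          rw [setLIntegral_const]
      _ ≤ _ := setLIntegral_mono (by fun_prop (disch := intro k; positivity)) hconst
  -- sum up
  rw [eq_top_iff]
  calc (⊤ : ENNReal) = ∑' _ : ℕ, ENNReal.ofReal (3 / (4 * (2 + c) ^ 2)) * B := by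
        rw [ENNReal.tsum_const_eq_top_of_ne_zero]
        exact mul_ne_zero ((ENNReal.ofReal_pos.mpr (by positivity)).ne') hB0
    _ ≤ ∑' n : ℕ, ∫⁻ k in A n, ENNReal.ofReal (1 / (1 + (‖k‖ + c) ^ 2)) ∂volume :=
        ENNReal.tsum_le_tsum hlow
    _ = ∫⁻ k in ⋃ n, A n, ENNReal.ofReal (1 / (1 + (‖k‖ + c) ^ 2)) ∂volume :=
        (lintegral_iUnion hAm hdisj _).symm
    _ ≤ ∫⁻ k : EuclideanSpace ℝ (Fin 2), ENNReal.ofReal (1 / (1 + (‖k‖ + c) ^ 2)) ∂volume :=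
        setLIntegral_le_lintegral _ _

open Metric Set in
/-- For every `x₀ ∈ ℝ²` with `x₀ ≠ 0` the function
`k ↦ sin²(⟨k, x₀⟩/2)/(1+|k|²)` is not integrable on `ℝ²`: the Lebesgue integral of this
non-negative function diverges. -/
theorem stmt_15 (x₀ : EuclideanSpace ℝ (Fin 2)) (hx₀ : x₀ ≠ 0) :
    ¬ Integrable (fun k : EuclideanSpace ℝ (Fin 2) =>
        Real.sin ((inner ℝ k x₀ : ℝ) / 2) ^ 2 / (1 + ‖k‖ ^ 2)) volume ∧
    ∫⁻ k : EuclideanSpace ℝ (Fin 2),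
      ENNReal.ofReal (Real.sin ((inner ℝ k x₀ : ℝ) / 2) ^ 2 / (1 + ‖k‖ ^ 2)) ∂volume = ⊤ := by
  set g : EuclideanSpace ℝ (Fin 2) → ENNReal := fun k =>
    ENNReal.ofReal (Real.sin ((inner ℝ k x₀ : ℝ) / 2) ^ 2 / (1 + ‖k‖ ^ 2)) with hg
  have hgc : Continuous g := by
    apply ENNReal.continuous_ofReal.comp
    apply Continuous.div
    · exact (Real.continuous_sin.comp ((continuous_id.inner continuous_const).div_const 2)).pow 2
    · exact continuous_const.add ((continuous_norm).pow 2)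
    · intro k; positivity
  set v : EuclideanSpace ℝ (Fin 2) := (Real.pi / ‖x₀‖ ^ 2) • x₀ with hv
  have hx0 : ‖x₀‖ ≠ 0 := norm_ne_zero_iff.mpr hx₀
  have hvx : (inner ℝ v x₀ : ℝ) = Real.pi := by
    rw [hv, real_inner_smul_left, real_inner_self_eq_norm_sq, div_mul_cancel₀]
    exact pow_ne_zero 2 hx0
  -- pointwise lower bound for g k + g (v + k)
  have hpt : ∀ k : EuclideanSpace ℝ (Fin 2), ENNReal.ofReal (1 / (1 + (‖k‖ + ‖v‖) ^ 2)) ≤ g k + g (v + k) := by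
    intro k
    set t : ℝ := (inner ℝ k x₀ : ℝ) with ht
    have hcos : Real.sin ((inner ℝ (v + k) x₀ : ℝ) / 2) ^ 2 = Real.cos (t / 2) ^ 2 := by
      rw [inner_add_left, hvx, show (Real.pi + t) / 2 = t / 2 + Real.pi / 2 by ring,
        Real.sin_add_pi_div_two]
    have hD1 : (0:ℝ) < 1 + ‖k‖ ^ 2 := by positivity
    have hD2 : (0:ℝ) < 1 + ‖v + k‖ ^ 2 := by positivity
    have hle1 : (1:ℝ) + ‖k‖ ^ 2 ≤ 1 + (‖k‖ + ‖v‖) ^ 2 := by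
      nlinarith [norm_nonneg k, norm_nonneg v]
    have hle2 : (1:ℝ) + ‖v + k‖ ^ 2 ≤ 1 + (‖k‖ + ‖v‖) ^ 2 := by
      have h := norm_add_le v k
      nlinarith [norm_nonneg (v + k), norm_nonneg k, norm_nonneg v]
    rw [hg]
    simp only
    rw [hcos, ← ENNReal.ofReal_add (by positivity) (by positivity)]
    apply ENNReal.ofReal_le_ofReal
    calc (1:ℝ) / (1 + (‖k‖ + ‖v‖) ^ 2)
        = Real.sin (t / 2) ^ 2 / (1 + (‖k‖ + ‖v‖) ^ 2)
          + Real.cos (t / 2) ^ 2 / (1 + (‖k‖ + ‖v‖) ^ 2) := by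
          rw [← add_div, Real.sin_sq_add_cos_sq]
      _ ≤ Real.sin (t / 2) ^ 2 / (1 + ‖k‖ ^ 2)
          + Real.cos (t / 2) ^ 2 / (1 + ‖v + k‖ ^ 2) := by
          gcongr
  -- the lintegral diverges
  have key : ∫⁻ k : EuclideanSpace ℝ (Fin 2), g k ∂volume = ⊤ := by
    have htrans : ∫⁻ k : EuclideanSpace ℝ (Fin 2), g (v + k) ∂volume = ∫⁻ k : EuclideanSpace ℝ (Fin 2), g k ∂volume :=
      lintegral_add_left_eq_self g v
    have hsum : (⊤ : ENNReal) ≤ ∫⁻ k : EuclideanSpace ℝ (Fin 2), (g k + g (v + k)) ∂volume := by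
      rw [← aux_div_stmt15 ‖v‖ (norm_nonneg v)]
      exact lintegral_mono hpt
    rw [lintegral_add_left hgc.measurable, htrans] at hsum
    have := top_le_iff.mp hsum
    rcases ENNReal.add_eq_top.mp this with h | h <;> exact h
  refine ⟨fun hI => ?_, key⟩
  exact (hI.lintegral_lt_top.ne) key
end
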